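/- arXiv:2303.14976 — 6 statements merged into one kernel-verified Lean document; each statement's English description precedes it below -/
import Mathlib

section
/- In the logic EC_n, the formula alive(U) ⇒ (D_U φ ⇒ φ) is derivable: axiom T holds restricted to alive groups. -/
/-- Formulas of epistemic logic with distributed knowledge:
atomic propositions, falsum, implication, and `D U φ` for groups `U` of agents. -/
inductive Fml (A : Type) : Type
  | atom : ℕ → Fml A
  | fls : Fml A
  | imp : Fml A → Fml A → Fml A
  | D : Finset A → Fml A → Fml A

namespace Fml
variable {A : Type}
/-- Negation. -/
def neg (φ : Fml A) : Fml A := imp φ fls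
/-- Truth. -/
def tru : Fml A := neg (fls (A := A))
/-- Conjunction. -/
def and (φ ψ : Fml A) : Fml A := neg (imp φ (neg ψ))
/-- `alive U := ¬ D_U ¬⊤`. -/
def alive (U : Finset A) : Fml A := neg (D U (neg tru))
/-- `dead a := K_a ⊥`. -/
def dead (a : A) : Fml A := D {a} fls
end Fml

/-- Propositional tautologies: formulas true under every valuation that
interprets `imp` and `fls` classically (atoms and `D`-formulas arbitrary). -/
def Taut {A : Type} (φ : Fml A) : Prop :=
  ∀ v : Fml A → Prop,
    (∀ ψ χ : Fml A, v (Fml.imp ψ χ) ↔ (v ψ → v χ)) → ¬ v Fml.fls → v φ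

/-- The Hilbert system EC_n: propositional tautologies, modus ponens,
necessitation, and axioms K, 4, B, Mono, Union. -/
inductive Prov {A : Type} [DecidableEq A] : Fml A → Prop
  | taut {φ : Fml A} : Taut φ → Prov φ
  | mp {φ ψ : Fml A} : Prov (Fml.imp φ ψ) → Prov φ → Prov ψ
  | nec (U : Finset A) {φ : Fml A} : Prov φ → Prov (Fml.D U φ)
  | axK (U : Finset A) (φ ψ : Fml A) :
      Prov (Fml.imp (Fml.D U (Fml.imp φ ψ)) (Fml.imp (Fml.D U φ) (Fml.D U ψ)))
  | ax4 (U : Finset A) (φ : Fml A) :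
      Prov (Fml.imp (Fml.D U φ) (Fml.D U (Fml.D U φ)))
  | axB (U : Finset A) (φ : Fml A) :
      Prov (Fml.imp φ (Fml.D U (Fml.neg (Fml.D U (Fml.neg φ)))))
  | axMono {U U' : Finset A} (φ : Fml A) :
      U ⊆ U' → Prov (Fml.imp (Fml.D U φ) (Fml.D U' φ))
  | axUnion (U U' : Finset A) :
      Prov (Fml.imp (Fml.and (Fml.alive U) (Fml.alive U')) (Fml.alive (U ∪ U')))


open Fml in
lemma prov_imp_trans {A : Type} [DecidableEq A] {p q r : Fml A}
    (h1 : Prov (imp p q)) (h2 : Prov (imp q r)) : Prov (imp p r) := by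
  have t : Prov (imp (imp p q) (imp (imp q r) (imp p r))) := by
    apply Prov.taut; intro v hv hf; simp only [hv]; tauto
  exact (t.mp h1).mp h2

open Fml in
lemma prov_K1 {A : Type} [DecidableEq A] (U : Finset A) {p q : Fml A}
    (h : Prov (imp p q)) : Prov (imp (D U p) (D U q)) :=
  (Prov.axK U p q).mp (Prov.nec U h)

open Fml in
lemma prov_K2 {A : Type} [DecidableEq A] (U : Finset A) {p q r : Fml A}
    (h : Prov (imp p (imp q r))) : Prov (imp (D U p) (imp (D U q) (D U r))) :=
  prov_imp_trans (prov_K1 U h) (Prov.axK U q r)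

/-- In EC_n, `alive U ⇒ (D_U φ ⇒ φ)` is derivable: axiom T restricted to alive groups. -/
theorem stmt6 {A : Type} [DecidableEq A] (U : Finset A) (φ : Fml A) :
    Prov (Fml.imp (Fml.alive U) (Fml.imp (Fml.D U φ) φ)) := by
  -- abbreviations
  have hdn : Prov (Fml.imp φ (Fml.neg (Fml.neg φ))) := by
    apply Prov.taut; intro v hv hf; simp only [Fml.neg, hv]; tauto
  -- D φ → D ¬¬φ, contraposed: ¬D¬¬φ → ¬Dφ
  have h1 : Prov (Fml.imp (Fml.D U φ) (Fml.D U (Fml.neg (Fml.neg φ)))) := prov_K1 U hdn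
  have hcontra : Prov (Fml.imp
      (Fml.imp (Fml.D U φ) (Fml.D U (Fml.neg (Fml.neg φ))))
      (Fml.imp (Fml.neg (Fml.D U (Fml.neg (Fml.neg φ)))) (Fml.neg (Fml.D U φ)))) := by
    apply Prov.taut; intro v hv hf; simp only [Fml.neg, hv]; tauto
  have h2 : Prov (Fml.imp (Fml.neg (Fml.D U (Fml.neg (Fml.neg φ)))) (Fml.neg (Fml.D U φ))) :=
    hcontra.mp h1
  -- lift: D(¬D¬¬φ) → D(¬Dφ)
  have h3 : Prov (Fml.imp (Fml.D U (Fml.neg (Fml.D U (Fml.neg (Fml.neg φ)))))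
      (Fml.D U (Fml.neg (Fml.D U φ)))) := prov_K1 U h2
  -- B: ¬φ → D(¬D¬¬φ)
  have hB : Prov (Fml.imp (Fml.neg φ)
      (Fml.D U (Fml.neg (Fml.D U (Fml.neg (Fml.neg φ)))))) := Prov.axB U (Fml.neg φ)
  have hBc : Prov (Fml.imp (Fml.neg φ) (Fml.D U (Fml.neg (Fml.D U φ)))) :=
    prov_imp_trans hB h3
  -- 4: Dφ → DDφ
  have h4 : Prov (Fml.imp (Fml.D U φ) (Fml.D U (Fml.D U φ))) := Prov.ax4 U φ
  -- D(Dφ) → D(¬Dφ) → D(¬tru)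
  have hinner : Prov (Fml.imp (Fml.D U φ)
      (Fml.imp (Fml.neg (Fml.D U φ)) (Fml.neg Fml.tru))) := by
    apply Prov.taut; intro v hv hf; simp only [Fml.neg, Fml.tru, hv]; tauto
  have h5 : Prov (Fml.imp (Fml.D U (Fml.D U φ))
      (Fml.imp (Fml.D U (Fml.neg (Fml.D U φ))) (Fml.D U (Fml.neg Fml.tru)))) :=
    prov_K2 U hinner
  -- big propositional assembly
  have big : Prov (Fml.imp
      (Fml.imp (Fml.D U φ) (Fml.D U (Fml.D U φ)))
      (Fml.imp (Fml.imp (Fml.neg φ) (Fml.D U (Fml.neg (Fml.D U φ))))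
      (Fml.imp (Fml.imp (Fml.D U (Fml.D U φ))
          (Fml.imp (Fml.D U (Fml.neg (Fml.D U φ))) (Fml.D U (Fml.neg Fml.tru))))
      (Fml.imp (Fml.alive U) (Fml.imp (Fml.D U φ) φ))))) := by
    apply Prov.taut; intro v hv hf; simp only [Fml.alive, Fml.neg, Fml.tru, hv]; tauto
  exact ((big.mp h4).mp hBc).mp h5
end

section
/- The logic EC_n is sound with respect to generalized epistemic models: every theorem of EC_n holds at every world of every generalized epistemic model. -/
/-- A generalized epistemic model: worlds, a PER `rel U` for each group `U`,
monotone in `U`, closed under union of alive groups, and a valuation. -/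
structure GEM (A : Type) [DecidableEq A] where
  W : Type
  rel : Finset A → W → W → Prop
  symm : ∀ U w w', rel U w w' → rel U w' w
  trans : ∀ U w₁ w₂ w₃, rel U w₁ w₂ → rel U w₂ w₃ → rel U w₁ w₃
  mono : ∀ (U U' : Finset A), U ⊆ U' → ∀ w w', rel U' w w' → rel U w w'
  union : ∀ (U U' : Finset A) w, rel U w w → rel U' w w → rel (U ∪ U') w w
  val : W → ℕ → Prop

/-- The satisfaction relation `M, w ⊨ φ`. -/
def Sat {A : Type} [DecidableEq A] (M : GEM A) : M.W → Fml A → Prop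
  | w, Fml.atom p => M.val w p
  | _, Fml.fls => False
  | w, Fml.imp φ ψ => Sat M w φ → Sat M w ψ
  | w, Fml.D U φ => ∀ w', M.rel U w w' → Sat M w' φ

/-- Soundness of EC_n: every theorem holds at every world of every generalized
epistemic model. -/
theorem stmt7 {A : Type} [DecidableEq A] (φ : Fml A) (h : Prov φ) :
    ∀ (M : GEM A) (w : M.W), Sat M w φ := by
  induction h with
  | taut ht =>
    intro M w
    exact ht (fun ψ => Sat M w ψ) (fun ψ χ => Iff.rfl) (fun h => h)
  | mp _ _ ih1 ih2 =>
    intro M w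
    exact ih1 M w (ih2 M w)
  | nec U _ ih =>
    intro M w w' _
    exact ih M w'
  | axK U φ ψ =>
    intro M w h1 h2 w' hr
    exact h1 w' hr (h2 w' hr)
  | ax4 U φ =>
    intro M w h w1 h1 w2 h2
    exact h w2 (M.trans U w w1 w2 h1 h2)
  | axB U φ =>
    intro M w h w1 h1 h2
    exact h2 w (M.symm U w w1 h1) h
  | axMono φ hsub =>
    intro M w h w' hr
    exact h w' (M.mono _ _ hsub w w' hr)
  | axUnion U U' =>
    intro M w hand hall
    apply hand
    intro haU haU'
    have hU : M.rel U w w := by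
      by_contra hc
      exact haU (fun w' hr' ht => hc (M.trans U w w' w hr' (M.symm U w w' hr')))
    have hU' : M.rel U' w w := by
      by_contra hc
      exact haU' (fun w' hr' ht => hc (M.trans U' w w' w hr' (M.symm U' w w' hr')))
    exact hall w (M.union U U' w hU hU') (fun h => h)
end

section
/- In the canonical model of EC_n, if Γ ∼_U Γ and Γ ∼_{U'} Γ then Γ ∼_{U∪U'} Γ (closure under union of alive groups). -/
variable {A : Type} [DecidableEq A]

/-- A set of formulas is consistent if no finite conjunction of its members
proves falsum in EC_n. -/
def ConSet (Γ : Set (Fml A)) : Prop :=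
  ¬ ∃ l : List (Fml A), (∀ ψ ∈ l, ψ ∈ Γ) ∧
      Prov (Fml.imp (l.foldr Fml.and Fml.tru) Fml.fls)

/-- Maximal consistent sets of formulas. -/
def MCS (Γ : Set (Fml A)) : Prop :=
  ConSet Γ ∧ ∀ φ : Fml A, φ ∉ Γ → ¬ ConSet (insert φ Γ)

/-- The canonical accessibility relation: `Γ ∼_U Δ` iff `D_U φ ∈ Γ` implies `φ ∈ Δ`. -/
def canRel (U : Finset A) (Γ Δ : Set (Fml A)) : Prop :=
  ∀ φ : Fml A, Fml.D U φ ∈ Γ → φ ∈ Δ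

attribute [local instance] Classical.propDecidable

/-- Conjunction of a list of formulas. -/
def conj (l : List (Fml A)) : Fml A := l.foldr Fml.and Fml.tru

/-- Provability from a set of hypotheses. -/
def GProv (Γ : Set (Fml A)) (φ : Fml A) : Prop :=
  ∃ l : List (Fml A), (∀ ψ ∈ l, ψ ∈ Γ) ∧ Prov (Fml.imp (conj l) φ)

lemma gprov_of_prov {Γ : Set (Fml A)} {φ : Fml A} (hp : Prov φ) : GProv Γ φ := by
  refine ⟨[], by simp, ?_⟩
  have t : Prov (Fml.imp φ (Fml.imp (conj ([] : List (Fml A))) φ)) :=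
    Prov.taut (by intro v hv hf; simp only [hv]; tauto)
  exact t.mp hp

lemma gprov_mem {Γ : Set (Fml A)} {φ : Fml A} (hφ : φ ∈ Γ) : GProv Γ φ := by
  refine ⟨[φ], by simpa using hφ, ?_⟩
  exact Prov.taut (by intro v hv hf; simp only [conj, List.foldr, Fml.and, Fml.neg, Fml.tru, hv]; tauto)

lemma conj_append (l1 l2 : List (Fml A)) :
    Prov (Fml.imp (conj (l1 ++ l2)) (Fml.and (conj l1) (conj l2))) := by
  induction l1 with
  | nil =>
      exact Prov.taut (by intro v hv hf; simp only [conj, List.nil_append, List.foldr,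
        Fml.and, Fml.neg, Fml.tru, hv]; tauto)
  | cons a t ih =>
      have t2 : Prov (Fml.imp (Fml.imp (conj (t ++ l2)) (Fml.and (conj t) (conj l2)))
          (Fml.imp (Fml.and a (conj (t ++ l2))) (Fml.and (Fml.and a (conj t)) (conj l2)))) :=
        Prov.taut (by intro v hv hf; simp only [Fml.and, Fml.neg, hv]; tauto)
      simpa [conj] using t2.mp ih

lemma gprov_mp {Γ : Set (Fml A)} {φ ψ : Fml A}
    (h1 : GProv Γ (Fml.imp φ ψ)) (h2 : GProv Γ φ) : GProv Γ ψ := by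
  obtain ⟨l1, hl1, hp1⟩ := h1
  obtain ⟨l2, hl2, hp2⟩ := h2
  refine ⟨l1 ++ l2, ?_, ?_⟩
  · intro χ hχ; rcases List.mem_append.mp hχ with hc | hc
    · exact hl1 χ hc
    · exact hl2 χ hc
  · have glue : Prov (Fml.imp (Fml.imp (conj (l1 ++ l2)) (Fml.and (conj l1) (conj l2)))
        (Fml.imp (Fml.imp (conj l1) (Fml.imp φ ψ))
          (Fml.imp (Fml.imp (conj l2) φ) (Fml.imp (conj (l1 ++ l2)) ψ)))) :=
      Prov.taut (by intro v hv hf; simp only [Fml.and, Fml.neg, hv]; tauto)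
    exact ((glue.mp (conj_append l1 l2)).mp hp1).mp hp2

lemma filter_lemma (φ : Fml A) (l : List (Fml A)) :
    Prov (Fml.imp φ (Fml.imp
      (conj (l.filter (fun ψ => !(decide (ψ = φ) : Bool)))) (conj l))) := by
  classical
  induction l with
  | nil =>
      exact Prov.taut (by intro v hv hf; simp only [conj, List.filter_nil, List.foldr,
        Fml.tru, Fml.neg, hv]; tauto)
  | cons a t ih =>
      by_cases ha : a = φ
      · subst ha
        have t2 : Prov (Fml.imp
            (Fml.imp a (Fml.imp (conj (t.filter (fun ψ => !(decide (ψ = a) : Bool)))) (conj t)))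
            (Fml.imp a (Fml.imp (conj (t.filter (fun ψ => !(decide (ψ = a) : Bool))))
              (Fml.and a (conj t))))) :=
          Prov.taut (by intro v hv hf; simp only [Fml.and, Fml.neg, hv]; tauto)
        have := t2.mp ih
        simpa [conj, List.filter_cons] using this
      · have t2 : Prov (Fml.imp
            (Fml.imp φ (Fml.imp (conj (t.filter (fun ψ => !(decide (ψ = φ) : Bool)))) (conj t)))
            (Fml.imp φ (Fml.imp (Fml.and a (conj (t.filter (fun ψ => !(decide (ψ = φ) : Bool)))))
              (Fml.and a (conj t))))) :=
          Prov.taut (by intro v hv hf; simp only [Fml.and, Fml.neg, hv]; tauto)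
        have := t2.mp ih
        simpa [conj, List.filter_cons, ha] using this

lemma mem_of_gprov {Γ : Set (Fml A)} (hΓ : MCS Γ) {φ : Fml A} (hg : GProv Γ φ) : φ ∈ Γ := by
  classical
  by_contra hφ
  have hins := hΓ.2 φ hφ
  rw [ConSet, not_not] at hins
  obtain ⟨l, hl, hp⟩ := hins
  obtain ⟨l', hl', hp'⟩ := hg
  set m := l.filter (fun ψ => !(decide (ψ = φ) : Bool)) with hm
  have hmΓ : ∀ ψ ∈ m, ψ ∈ Γ := by
    intro ψ hψ
    have := List.mem_filter.mp hψ
    rcases hl ψ this.1 with h1 | h1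
    · exfalso; simp at this; exact this.2 h1
    · exact h1
  have hfil : Prov (Fml.imp φ (Fml.imp (conj m) (conj l))) := filter_lemma φ l
  have glue : Prov (Fml.imp (Fml.imp (conj (l' ++ m)) (Fml.and (conj l') (conj m)))
      (Fml.imp (Fml.imp (conj l') φ)
        (Fml.imp (Fml.imp φ (Fml.imp (conj m) (conj l)))
          (Fml.imp (Fml.imp (conj l) Fml.fls)
            (Fml.imp (conj (l' ++ m)) Fml.fls))))) :=
    Prov.taut (by intro v hv hf; simp only [Fml.and, Fml.neg, hv]; tauto)
  have hbad : Prov (Fml.imp (conj (l' ++ m)) Fml.fls) :=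
    ((((glue.mp (conj_append l' m)).mp hp').mp hfil).mp
      (by simpa [conj, Fml.tru] using hp))
  refine hΓ.1 ⟨l' ++ m, ?_, by simpa [conj, Fml.tru] using hbad⟩
  intro ψ hψ
  rcases List.mem_append.mp hψ with hc | hc
  · exact hl' ψ hc
  · exact hmΓ ψ hc

lemma not_gprov_fls {Γ : Set (Fml A)} (hΓ : MCS Γ) : ¬ GProv Γ Fml.fls := by
  rintro ⟨l, hl, hp⟩
  exact hΓ.1 ⟨l, hl, by simpa [conj] using hp⟩

lemma alive_mem {Γ : Set (Fml A)} (hΓ : MCS Γ) {U : Finset A}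
    (h : canRel U Γ Γ) : Fml.alive U ∈ Γ := by
  classical
  by_contra hφ
  have hins := hΓ.2 _ hφ
  rw [ConSet, not_not] at hins
  obtain ⟨l, hl, hp⟩ := hins
  set X : Fml A := Fml.D U (Fml.neg Fml.tru) with hX
  set m := l.filter (fun ψ => !(decide (ψ = Fml.alive U) : Bool)) with hm
  have hmΓ : ∀ ψ ∈ m, ψ ∈ Γ := by
    intro ψ hψ
    have := List.mem_filter.mp hψ
    rcases hl ψ this.1 with h1 | h1
    · exfalso; simp at this; exact this.2 h1
    · exact h1
  have hfil : Prov (Fml.imp (Fml.alive U) (Fml.imp (conj m) (conj l))) :=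
    filter_lemma (Fml.alive U) l
  -- from (X→⊥) → c2 → cl and cl → ⊥ derive c2 → X
  have glue : Prov (Fml.imp (Fml.imp (Fml.alive U) (Fml.imp (conj m) (conj l)))
      (Fml.imp (Fml.imp (conj l) Fml.fls) (Fml.imp (conj m) X))) :=
    Prov.taut (by intro v hv hf; simp only [Fml.alive, Fml.neg, hv]; tauto)
  have hX' : GProv Γ X :=
    ⟨m, hmΓ, (glue.mp hfil).mp (by simpa [conj, Fml.tru] using hp)⟩
  have hXmem : X ∈ Γ := mem_of_gprov hΓ hX'
  have hnt : Fml.neg Fml.tru ∈ Γ := h _ hXmem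
  have htru : Prov (Fml.tru (A := A)) :=
    Prov.taut (by intro v hv hf; simp only [Fml.tru, Fml.neg, hv]; tauto)
  exact not_gprov_fls hΓ (gprov_mp (gprov_mem hnt) (gprov_of_prov htru))

/-- K-distribution. -/
lemma provDK (U : Finset A) {α β : Fml A} (h : Prov (Fml.imp α β)) :
    Prov (Fml.imp (Fml.D U α) (Fml.D U β)) :=
  (Prov.axK U α β).mp (Prov.nec U h)

lemma provD2 (U : Finset A) {α β γ : Fml A} (h : Prov (Fml.imp α (Fml.imp β γ))) :
    Prov (Fml.imp (Fml.D U α) (Fml.imp (Fml.D U β) (Fml.D U γ))) := by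
  have h1 : Prov (Fml.imp (Fml.D U α) (Fml.D U (Fml.imp β γ))) := provDK U h
  have h2 := Prov.axK U β γ
  have glue : Prov (Fml.imp (Fml.imp (Fml.D U α) (Fml.D U (Fml.imp β γ)))
      (Fml.imp (Fml.imp (Fml.D U (Fml.imp β γ)) (Fml.imp (Fml.D U β) (Fml.D U γ)))
        (Fml.imp (Fml.D U α) (Fml.imp (Fml.D U β) (Fml.D U γ))))) :=
    Prov.taut (by intro v hv hf; simp only [hv]; tauto)
  exact (glue.mp h1).mp h2

/-- `alive V → (D_V φ → φ)` is derivable. -/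
lemma aliveT (V : Finset A) (φ : Fml A) :
    Prov (Fml.imp (Fml.alive V) (Fml.imp (Fml.D V φ) φ)) := by
  have h1 : Prov (Fml.imp (Fml.D V φ) (Fml.D V (Fml.neg (Fml.neg φ)))) :=
    provDK V (Prov.taut (by intro v hv hf; simp only [Fml.neg, hv]; tauto))
  have h2 := Prov.ax4 V (Fml.neg (Fml.neg φ))
  have h3 := Prov.axB V (Fml.neg φ)
  have h4 : Prov (Fml.imp (Fml.D V (Fml.D V (Fml.neg (Fml.neg φ))))
      (Fml.imp (Fml.D V (Fml.neg (Fml.D V (Fml.neg (Fml.neg φ)))))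
        (Fml.D V (Fml.neg Fml.tru)))) :=
    provD2 V (Prov.taut (by intro v hv hf; simp only [Fml.neg, Fml.tru, hv]; tauto))
  have glue : Prov (Fml.imp (Fml.imp (Fml.D V φ) (Fml.D V (Fml.neg (Fml.neg φ))))
      (Fml.imp (Fml.imp (Fml.D V (Fml.neg (Fml.neg φ)))
          (Fml.D V (Fml.D V (Fml.neg (Fml.neg φ)))))
        (Fml.imp (Fml.imp (Fml.neg φ) (Fml.D V (Fml.neg (Fml.D V (Fml.neg (Fml.neg φ))))))
          (Fml.imp (Fml.imp (Fml.D V (Fml.D V (Fml.neg (Fml.neg φ))))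
              (Fml.imp (Fml.D V (Fml.neg (Fml.D V (Fml.neg (Fml.neg φ)))))
                (Fml.D V (Fml.neg Fml.tru))))
            (Fml.imp (Fml.alive V) (Fml.imp (Fml.D V φ) φ)))))) :=
    Prov.taut (by intro v hv hf; simp only [Fml.alive, Fml.neg, hv]; tauto)
  exact (((glue.mp h1).mp h2).mp h3).mp h4

/-- In the canonical model of EC_n, the relations are closed under union of
alive groups: `Γ ∼_U Γ` and `Γ ∼_{U'} Γ` imply `Γ ∼_{U ∪ U'} Γ`. -/
theorem stmt10 (U U' : Finset A) (Γ : Set (Fml A)) (hΓ : MCS Γ)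
    (h : canRel U Γ Γ) (h' : canRel U' Γ Γ) : canRel (U ∪ U') Γ Γ := by
  have hU : Fml.alive U ∈ Γ := alive_mem hΓ h
  have hU' : Fml.alive U' ∈ Γ := alive_mem hΓ h'
  have hand : Fml.and (Fml.alive U) (Fml.alive U') ∈ Γ := by
    have t : Prov (Fml.imp (Fml.alive U) (Fml.imp (Fml.alive U')
        (Fml.and (Fml.alive U) (Fml.alive U')))) :=
      Prov.taut (by intro v hv hf; simp only [Fml.and, Fml.neg, hv]; tauto)
    exact mem_of_gprov hΓ (gprov_mp (gprov_mp (gprov_of_prov t) (gprov_mem hU)) (gprov_mem hU'))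
  have halive : Fml.alive (U ∪ U') ∈ Γ :=
    mem_of_gprov hΓ (gprov_mp (gprov_of_prov (Prov.axUnion U U')) (gprov_mem hand))
  intro φ hDφ
  exact mem_of_gprov hΓ
    (gprov_mp (gprov_mp (gprov_of_prov (aliveT (U ∪ U') φ)) (gprov_mem halive)) (gprov_mem hDφ))
end

section
/- Truth Lemma: in the canonical model M^c of EC_n, for every formula φ and every maximal consistent set Γ, φ ∈ Γ if and only if M^c, Γ ⊨ φ. -/
variable {A : Type} [DecidableEq A]

/-- Satisfaction in the canonical model of EC_n, whose worlds are the maximal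
consistent sets, with `Γ ∼_U Δ` iff `D_U φ ∈ Γ` implies `φ ∈ Δ`, and valuation
`L(Γ) = Γ ∩ AP`. -/
def canSat : Fml A → {Γ : Set (Fml A) // MCS Γ} → Prop
  | Fml.atom p, Γ => Fml.atom p ∈ Γ.1
  | Fml.fls, _ => False
  | Fml.imp φ ψ, Γ => canSat φ Γ → canSat ψ Γ
  | Fml.D U φ, Γ => ∀ Δ : {Γ : Set (Fml A) // MCS Γ}, canRel U Γ.1 Δ.1 → canSat φ Δ

section Aux
variable {A : Type} [DecidableEq A]

/-- Finite conjunction. -/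
abbrev conjL (l : List (Fml A)) : Fml A := l.foldr Fml.and Fml.tru

/-- Derivability from a set. -/
def Der (Γ : Set (Fml A)) (φ : Fml A) : Prop :=
  ∃ l : List (Fml A), (∀ ψ ∈ l, ψ ∈ Γ) ∧ Prov (Fml.imp (conjL l) φ)

lemma conSet_iff_not_der {Γ : Set (Fml A)} : ConSet Γ ↔ ¬ Der Γ Fml.fls := Iff.rfl

lemma der_fls_of_not_con {Γ : Set (Fml A)} (h : ¬ ConSet Γ) : Der Γ Fml.fls :=
  not_not.mp (fun hn => h (conSet_iff_not_der.mpr hn))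

lemma prov_imp_trans_s11 {a b c : Fml A} (h1 : Prov (Fml.imp a b)) (h2 : Prov (Fml.imp b c)) :
    Prov (Fml.imp a c) := by
  refine Prov.mp (Prov.mp (Prov.taut ?_) h1) h2
  intro v hv hf
  simp only [conjL, List.foldr_cons, List.foldr_nil, List.map_cons, Fml.and, Fml.neg, Fml.tru, hv]; tauto

lemma prov_and_intro {c a b : Fml A} (h1 : Prov (Fml.imp c a)) (h2 : Prov (Fml.imp c b)) :
    Prov (Fml.imp c (Fml.and a b)) := by
  refine Prov.mp (Prov.mp (Prov.taut ?_) h1) h2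
  intro v hv hf
  simp only [conjL, List.foldr_cons, List.foldr_nil, List.map_cons, Fml.and, Fml.neg, Fml.tru, hv]; tauto

lemma prov_conj_mem {l : List (Fml A)} {ψ : Fml A} (h : ψ ∈ l) :
    Prov (Fml.imp (conjL l) ψ) := by
  induction l with
  | nil => simp at h
  | cons a l ih =>
    rcases List.mem_cons.mp h with rfl | h
    · exact Prov.taut (by intro v hv hf; simp only [conjL, List.foldr_cons, List.foldr_nil, List.map_cons, Fml.and, Fml.neg, Fml.tru, hv]; tauto)
    · refine prov_imp_trans_s11 (Prov.taut ?_) (ih h)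
      intro v hv hf; simp only [conjL, List.foldr_cons, List.foldr_nil, List.map_cons, Fml.and, Fml.neg, Fml.tru, hv]; tauto

lemma prov_conj_mono {l l' : List (Fml A)} (h : ∀ ψ ∈ l, ψ ∈ l') :
    Prov (Fml.imp (conjL l') (conjL l)) := by
  induction l with
  | nil =>
    exact Prov.taut (by intro v hv hf; simp only [conjL, List.foldr_cons, List.foldr_nil, List.map_cons, Fml.and, Fml.neg, Fml.tru, hv]; tauto)
  | cons a l ih =>
    exact prov_and_intro (prov_conj_mem (h a (by simp)))
      (ih fun ψ hψ => h ψ (by simp [hψ]))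

lemma der_of_prov {Γ : Set (Fml A)} {φ : Fml A} (h : Prov φ) : Der Γ φ := by
  refine ⟨[], by simp, Prov.mp (Prov.taut ?_) h⟩
  intro v hv hf; simp only [conjL, List.foldr_cons, List.foldr_nil, List.map_cons, Fml.and, Fml.neg, Fml.tru, hv]; tauto

lemma der_of_mem {Γ : Set (Fml A)} {φ : Fml A} (h : φ ∈ Γ) : Der Γ φ :=
  ⟨[φ], by simpa using h, prov_conj_mem (by simp)⟩

lemma der_mp {Γ : Set (Fml A)} {φ ψ : Fml A} (h1 : Der Γ (Fml.imp φ ψ)) (h2 : Der Γ φ) :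
    Der Γ ψ := by
  obtain ⟨l1, hl1, p1⟩ := h1
  obtain ⟨l2, hl2, p2⟩ := h2
  refine ⟨l1 ++ l2, by intro χ hχ; rcases List.mem_append.mp hχ with h | h
                       exacts [hl1 χ h, hl2 χ h], ?_⟩
  have q1 : Prov (Fml.imp (conjL (l1 ++ l2)) (Fml.imp φ ψ)) :=
    prov_imp_trans_s11 (prov_conj_mono fun χ h => List.mem_append.mpr (Or.inl h)) p1
  have q2 : Prov (Fml.imp (conjL (l1 ++ l2)) φ) :=
    prov_imp_trans_s11 (prov_conj_mono fun χ h => List.mem_append.mpr (Or.inr h)) p2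
  refine Prov.mp (Prov.mp (Prov.taut ?_) q1) q2
  intro v hv hf; simp only [conjL, List.foldr_cons, List.foldr_nil, List.map_cons, Fml.and, Fml.neg, Fml.tru, hv]; tauto

lemma der_mono {Γ Γ' : Set (Fml A)} {φ : Fml A} (hs : Γ ⊆ Γ') (h : Der Γ φ) : Der Γ' φ := by
  obtain ⟨l, hl, p⟩ := h
  exact ⟨l, fun ψ hψ => hs (hl ψ hψ), p⟩

/-- Deduction-style lemma. -/
lemma der_neg_of_insert {Γ : Set (Fml A)} {ψ : Fml A}
    (h : Der (insert ψ Γ) Fml.fls) : Der Γ (Fml.neg ψ) := by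
  classical
  obtain ⟨l, hl, p⟩ := h
  set lΓ := l.filter (fun χ => decide (χ ∈ Γ)) with hlΓ
  have hmem : ∀ χ ∈ l, χ ∈ ψ :: lΓ := by
    intro χ hχ
    rcases hl χ hχ with h | h
    · simp [h]
    · exact List.mem_cons.mpr (Or.inr (List.mem_filter.mpr ⟨hχ, by simpa using h⟩))
  have q : Prov (Fml.imp (conjL (ψ :: lΓ)) Fml.fls) :=
    prov_imp_trans_s11 (prov_conj_mono hmem) p
  refine ⟨lΓ, ?_, ?_⟩
  · intro χ hχ
    have := List.mem_filter.mp hχ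
    simpa using this.2
  · refine Prov.mp (Prov.taut ?_) q
    intro v hv hf; simp only [conjL, List.foldr_cons, List.foldr_nil, List.map_cons, Fml.and, Fml.neg, Fml.tru, hv]; tauto

section MCSfacts
variable {Γ : Set (Fml A)} (hΓ : MCS Γ)
include hΓ

lemma mcs_mem_of_der {φ : Fml A} (h : Der Γ φ) : φ ∈ Γ := by
  by_contra hn
  have h1 : ¬ ConSet (insert φ Γ) := hΓ.2 φ hn
  have h2 : Der (insert φ Γ) Fml.fls := der_fls_of_not_con h1
  have h3 : Der Γ (Fml.neg φ) := der_neg_of_insert h2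
  exact conSet_iff_not_der.mp hΓ.1 (der_mp h3 h)

lemma mcs_prov {φ : Fml A} (h : Prov φ) : φ ∈ Γ := mcs_mem_of_der hΓ (der_of_prov h)

lemma mcs_mp {φ ψ : Fml A} (h1 : Fml.imp φ ψ ∈ Γ) (h2 : φ ∈ Γ) : ψ ∈ Γ :=
  mcs_mem_of_der hΓ (der_mp (der_of_mem h1) (der_of_mem h2))

lemma mcs_fls : Fml.fls ∉ Γ := fun h =>
  conSet_iff_not_der.mp hΓ.1 (der_of_mem h)

lemma mcs_neg {φ : Fml A} (h : φ ∉ Γ) : Fml.neg φ ∈ Γ := by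
  have h1 : Der (insert φ Γ) Fml.fls := der_fls_of_not_con (hΓ.2 φ h)
  exact mcs_mem_of_der hΓ (der_neg_of_insert h1)

lemma mcs_imp {φ ψ : Fml A} : Fml.imp φ ψ ∈ Γ ↔ (φ ∈ Γ → ψ ∈ Γ) := by
  constructor
  · exact fun h1 h2 => mcs_mp hΓ h1 h2
  · intro h
    by_cases hφ : φ ∈ Γ
    · refine mcs_mem_of_der hΓ (der_mp (der_of_prov (Prov.taut ?_)) (der_of_mem (h hφ)))
      intro v hv hf; simp only [conjL, List.foldr_cons, List.foldr_nil, List.map_cons, Fml.and, Fml.neg, Fml.tru, hv]; tauto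
    · refine mcs_mem_of_der hΓ
        (der_mp (der_of_prov (Prov.taut ?_)) (der_of_mem (mcs_neg hΓ hφ)))
      intro v hv hf; simp only [conjL, List.foldr_cons, List.foldr_nil, List.map_cons, Fml.and, Fml.neg, Fml.tru, hv]; tauto

end MCSfacts

lemma lindenbaum {S : Set (Fml A)} (h : ConSet S) : ∃ Δ : Set (Fml A), S ⊆ Δ ∧ MCS Δ := by
  have hz : ∀ c ⊆ {T : Set (Fml A) | ConSet T}, IsChain (· ⊆ ·) c → c.Nonempty →
      ∃ ub ∈ {T : Set (Fml A) | ConSet T}, ∀ s ∈ c, s ⊆ ub := by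
    intro c hc hchain hne
    refine ⟨⋃₀ c, ?_, fun s hs => Set.subset_sUnion_of_mem hs⟩
    rw [Set.mem_setOf_eq, conSet_iff_not_der]
    rintro ⟨l, hl, p⟩
    have key : ∃ T ∈ c, ∀ ψ ∈ l, ψ ∈ T := by
      clear p
      induction l with
      | nil => obtain ⟨T, hT⟩ := hne; exact ⟨T, hT, by simp⟩
      | cons a l ih =>
        obtain ⟨T, hTc, hT⟩ := ih (fun ψ hψ => hl ψ (List.mem_cons.mpr (Or.inr hψ)))
        obtain ⟨T', hT'c, haT'⟩ := hl a (by simp)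
        obtain ⟨T'', hT''c, h1, h2⟩ := hchain.directedOn T hTc T' hT'c
        exact ⟨T'', hT''c, fun ψ hψ => by
          rcases List.mem_cons.mp hψ with rfl | hψ
          · exact h2 haT'
          · exact h1 (hT ψ hψ)⟩
    obtain ⟨T, hTc, hT⟩ := key
    exact conSet_iff_not_der.mp (hc hTc) ⟨l, hT, p⟩
  obtain ⟨m, hsm, hmax⟩ := zorn_subset_nonempty {T : Set (Fml A) | ConSet T} hz S h
  refine ⟨m, hsm, hmax.1, fun φ hφ hcon => hφ ?_⟩
  have := hmax.2 hcon (Set.subset_insert φ m)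
  exact this (Set.mem_insert φ m)

/-- D distributes over finite conjunctions. -/
lemma prov_conj_D (U : Finset A) (l : List (Fml A)) :
    Prov (Fml.imp (conjL (l.map (Fml.D U))) (Fml.D U (conjL l))) := by
  induction l with
  | nil =>
    have h1 : Prov (Fml.D U (conjL ([] : List (Fml A)))) :=
      Prov.nec U (Prov.taut (by intro v hv hf; simp only [conjL, List.foldr_cons, List.foldr_nil, List.map_cons, Fml.and, Fml.neg, Fml.tru, hv]; tauto))
    refine Prov.mp (Prov.mp (Prov.taut ?_) h1) h1
    intro v hv hf; simp only [conjL, List.foldr_cons, List.foldr_nil, List.map_cons, Fml.and, Fml.neg, Fml.tru, hv]; tauto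
  | cons a l ih =>
    have hk : Prov (Fml.imp (Fml.D U a) (Fml.D U (Fml.imp (conjL l) (Fml.and a (conjL l))))) := by
      refine Prov.mp (Prov.axK U a _) (Prov.nec U (Prov.taut ?_))
      intro v hv hf; simp only [conjL, List.foldr_cons, List.foldr_nil, List.map_cons, Fml.and, Fml.neg, Fml.tru, hv]; tauto
    have hk2 := Prov.axK (A := A) U (conjL l) (Fml.and a (conjL l))
    -- from D a and D (conj l), get D (a ∧ conj l)
    have h1 : Prov (Fml.imp (conjL ((a :: l).map (Fml.D U))) (Fml.D U a)) :=
      prov_conj_mem (by simp)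
    have h2 : Prov (Fml.imp (conjL ((a :: l).map (Fml.D U))) (Fml.D U (conjL l))) := by
      refine prov_imp_trans_s11 (Prov.taut ?_) ih
      intro v hv hf; simp only [conjL, List.foldr_cons, List.foldr_nil, List.map_cons, Fml.and, Fml.neg, Fml.tru, hv]; tauto
    have h3 : Prov (Fml.imp (conjL ((a :: l).map (Fml.D U)))
        (Fml.D U (Fml.imp (conjL l) (Fml.and a (conjL l))))) := prov_imp_trans_s11 h1 hk
    have h4 : Prov (Fml.imp (conjL ((a :: l).map (Fml.D U)))
        (Fml.imp (Fml.D U (conjL l)) (Fml.D U (Fml.and a (conjL l))))) :=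
      prov_imp_trans_s11 h3 hk2
    refine Prov.mp (Prov.mp (Prov.taut ?_) h4) h2
    intro v hv hf; simp only [conjL, List.foldr_cons, List.foldr_nil, List.map_cons, Fml.and, Fml.neg, Fml.tru, hv]; tauto

/-- Existence lemma. -/
lemma existence {Γ : Set (Fml A)} (hΓ : MCS Γ) {U : Finset A} {φ : Fml A}
    (h : Fml.D U φ ∉ Γ) :
    ∃ Δ : Set (Fml A), MCS Δ ∧ canRel U Γ Δ ∧ φ ∉ Δ := by
  classical
  set S : Set (Fml A) := {ψ | Fml.D U ψ ∈ Γ} with hS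
  have hcon : ConSet (insert (Fml.neg φ) S) := by
    rw [conSet_iff_not_der]
    intro hder
    have h1 : Der S (Fml.neg (Fml.neg φ)) := der_neg_of_insert hder
    have h2 : Der S φ := by
      refine der_mp (der_of_prov (Prov.taut ?_)) h1
      intro v hv hf; simp only [conjL, List.foldr_cons, List.foldr_nil, List.map_cons, Fml.and, Fml.neg, Fml.tru, hv]; tauto
    obtain ⟨l, hl, p⟩ := h2
    -- D_U φ is derivable in Γ
    have hnec : Prov (Fml.D U (Fml.imp (conjL l) φ)) := Prov.nec U p
    have hk : Prov (Fml.imp (Fml.D U (conjL l)) (Fml.D U φ)) :=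
      Prov.mp (Prov.axK U _ _) hnec
    have hd : Der Γ (Fml.D U φ) := by
      refine ⟨l.map (Fml.D U), ?_, prov_imp_trans_s11 (prov_conj_D U l) hk⟩
      intro ψ hψ
      obtain ⟨χ, hχ, rfl⟩ := List.mem_map.mp hψ
      exact hl χ hχ
    exact h (mcs_mem_of_der hΓ hd)
  obtain ⟨Δ, hsub, hΔ⟩ := lindenbaum hcon
  refine ⟨Δ, hΔ, fun ψ hψ => hsub (Set.mem_insert_of_mem _ hψ), fun hφΔ => ?_⟩
  have hneg : Fml.neg φ ∈ Δ := hsub (Set.mem_insert _ _)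
  exact mcs_fls hΔ (mcs_mp hΔ hneg hφΔ)

end Aux

/-- Truth Lemma: in the canonical model of EC_n, `φ ∈ Γ` iff `M^c, Γ ⊨ φ`. -/
theorem stmt11 (Γ : {Γ : Set (Fml A) // MCS Γ}) (φ : Fml A) :
    φ ∈ Γ.1 ↔ canSat φ Γ := by
  
  induction φ generalizing Γ with
  | atom p => exact Iff.rfl
  | fls => exact ⟨fun h => mcs_fls Γ.2 h, fun h => h.elim⟩
  | imp φ ψ ihφ ihψ =>
    show _ ↔ (canSat φ Γ → canSat ψ Γ)
    rw [← ihφ, ← ihψ]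
    exact mcs_imp Γ.2
  | D U φ ih =>
    constructor
    · intro h Δ hΔ
      exact (ih Δ).mp (hΔ φ h)
    · intro h
      by_contra hn
      obtain ⟨Δ, hΔ, hrel, hφ⟩ := existence Γ.2 hn
      exact hφ ((ih ⟨Δ, hΔ⟩).mpr (h ⟨Δ, hΔ⟩ hrel))
end

section
/- The unraveling U(M) of a generalized epistemic model M is itself a generalized epistemic model: each ∼^u_U is a PER, the family is monotone in U, and it is closed under union of alive groups. -/
variable {A : Type} [DecidableEq A]

/-- Raw histories over a model `M`: a starting world followed by steps `(U, w)`. -/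
inductive Hist (M : GEM A) : Type
  | base : M.W → Hist M
  | step : Hist M → Finset A → M.W → Hist M

/-- The last world of a history. -/
def lastW {M : GEM A} : Hist M → M.W
  | .base w => w
  | .step _ _ w => w

/-- A history `(w₀, U₁, w₁, …, U_k, w_k)` is valid when each `w_{i-1} ∼_{U_i} w_i`
and each `U_i` is maximal (w.r.t. inclusion) among groups relating `w_{i-1}` and `w_i`. -/
def validH {M : GEM A} : Hist M → Prop
  | .base _ => True
  | .step h U w => validH h ∧ M.rel U (lastW h) w ∧
      ∀ V : Finset A, U ⊆ V → M.rel V (lastW h) w → V = U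

/-- Valid histories: the worlds of the unraveling. -/
def HistV (M : GEM A) : Type := {h : Hist M // validH h}

/-- `h →_U h'` iff `h'` extends `h` by one step `(U', w)` with `U ⊆ U'`. -/
def stepRel (M : GEM A) (U : Finset A) (h h' : HistV M) : Prop :=
  ∃ (U' : Finset A) (w : M.W), U ⊆ U' ∧ h'.1 = Hist.step h.1 U' w

/-- `∼^u_U`: the symmetric-transitive closure of `→_U`. -/
def uSim (M : GEM A) (U : Finset A) : HistV M → HistV M → Prop :=
  Relation.TransGen fun x y => stepRel M U x y ∨ stepRel M U y x

lemma uSim_symm {M : GEM A} {U : Finset A} {h h' : HistV M}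
    (hs : uSim M U h h') : uSim M U h' h := by
  induction hs with
  | single e => exact Relation.TransGen.single e.symm
  | tail _ e ih => exact Relation.TransGen.head e.symm ih

lemma edge_refl_last {M : GEM A} {U : Finset A} {h y : HistV M}
    (e : stepRel M U h y ∨ stepRel M U y h) :
    ∃ V : Finset A, U ⊆ V ∧ M.rel V (lastW h.1) (lastW h.1) := by
  rcases e with ⟨V, w, hUV, heq⟩ | ⟨V, w, hUV, heq⟩
  · have hv := y.2
    rw [heq] at hv
    rcases hv with ⟨_, hrel, _⟩
    exact ⟨V, hUV, M.trans V _ w _ hrel (M.symm V _ _ hrel)⟩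
  · have hv := h.2
    rw [heq] at hv
    rcases hv with ⟨_, hrel, _⟩
    have hl : lastW h.1 = w := by rw [heq]; rfl
    rw [hl]
    exact ⟨V, hUV, M.trans V w _ w (M.symm V _ _ hrel) hrel⟩

/-- From a `uSim`-edge chain starting at `h`, extract a reflexive relation at
`lastW h` for a superset of `U`. -/
lemma uSim_refl_last {M : GEM A} {U : Finset A} {h h' : HistV M}
    (hs : uSim M U h h') :
    ∃ V : Finset A, U ⊆ V ∧ M.rel V (lastW h.1) (lastW h.1) := by
  induction hs with
  | single e => exact edge_refl_last e
  | tail _ _ ih => exact ih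

open Classical in
/-- The unraveling of a generalized epistemic model is itself a generalized
epistemic model: each `∼^u_U` is a PER, the family is monotone in `U`, and it
is closed under union of alive groups. -/
theorem stmt17 {A : Type} [DecidableEq A] [Fintype A] (M : GEM A) :
    (∀ (U : Finset A) (h h' : HistV M), uSim M U h h' → uSim M U h' h) ∧
    (∀ (U : Finset A) (h₁ h₂ h₃ : HistV M),
      uSim M U h₁ h₂ → uSim M U h₂ h₃ → uSim M U h₁ h₃) ∧
    (∀ U U' : Finset A, U ⊆ U' → ∀ h h' : HistV M, uSim M U' h h' → uSim M U h h') ∧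
    (∀ (U U' : Finset A) (h : HistV M),
      uSim M U h h → uSim M U' h h → uSim M (U ∪ U') h h) := by
  refine ⟨?_, ?_, ?_, ?_⟩
  · intro U h h' hs; exact uSim_symm hs
  · intro U h₁ h₂ h₃ h12 h23; exact h12.trans h23
  · intro U U' hUU' h h' hs
    refine Relation.TransGen.mono (fun x y e => ?_) _ _ hs
    rcases e with ⟨V, w, hV, heq⟩ | ⟨V, w, hV, heq⟩
    · exact Or.inl ⟨V, w, hUU'.trans hV, heq⟩
    · exact Or.inr ⟨V, w, hUU'.trans hV, heq⟩
  · intro U U' h hU hU'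
    obtain ⟨V, hUV, hrV⟩ := uSim_refl_last hU
    obtain ⟨V', hUV', hrV'⟩ := uSim_refl_last hU'
    set l := lastW h.1 with hl
    have hrel : M.rel (U ∪ U') l l :=
      M.union U U' l (M.mono U V hUV l l hrV) (M.mono U' V' hUV' l l hrV')
    -- find a maximal superset of U ∪ U' relating l to l
    classical
    let S : Finset (Finset A) :=
      Finset.univ.filter (fun V => U ∪ U' ⊆ V ∧ M.rel V l l)
    have hmem : (U ∪ U') ∈ S := by
      simp only [S, Finset.mem_filter, Finset.mem_univ, true_and]
      exact ⟨Finset.Subset.refl _, hrel⟩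
    obtain ⟨Vm, hVmS, hVmax⟩ := S.exists_max_image Finset.card ⟨_, hmem⟩
    simp only [S, Finset.mem_filter, Finset.mem_univ, true_and] at hVmS
    obtain ⟨hsub, hrelm⟩ := hVmS
    have hmax : ∀ V : Finset A, Vm ⊆ V → M.rel V l l → V = Vm := by
      intro V hVmV hrelV
      have hVS : V ∈ S := by
        simp only [S, Finset.mem_filter, Finset.mem_univ, true_and]
        exact ⟨hsub.trans hVmV, hrelV⟩
      exact (Finset.eq_of_subset_of_card_le hVmV (hVmax V hVS)).symm
    have hvalid : validH (Hist.step h.1 Vm l) := ⟨h.2, hrelm, hmax⟩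
    let h' : HistV M := ⟨Hist.step h.1 Vm l, hvalid⟩
    have hstep : stepRel M (U ∪ U') h h' := ⟨Vm, l, hsub, rfl⟩
    exact Relation.TransGen.head (Or.inl hstep) (Relation.TransGen.single (Or.inr hstep))
end

section
/- The unraveling U(M) of a generalized epistemic model has standard group knowledge: if h ∼^u_U h' and h ∼^u_{U'} h', then h ∼^u_{U∪U'} h'. Consequently, ∼^u_V = ⋂_{a∈V} ∼^u_{{a}} fornonempty V. -/
variable {A : Type} [DecidableEq A]

section Aux
variable {A : Type} [DecidableEq A] {M : GEM A}

/-- `p` is an ancestor of `h` with all edge labels on the way containing `U`. -/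
def desc (U : Finset A) (p : Hist M) : Hist M → Prop
  | .base w => p = .base w
  | .step h' L w => p = .step h' L w ∨ (U ⊆ L ∧ desc U p h')

/-- `p` is a prefix (ancestor-or-equal) of `h`. -/
def pfx (p : Hist M) : Hist M → Prop
  | .base w => p = .base w
  | .step h' L w => p = .step h' L w ∨ pfx p h'

def lenH : Hist M → ℕ
  | .base _ => 0
  | .step h _ _ => lenH h + 1

lemma desc_refl (U : Finset A) : ∀ p : Hist M, desc U p p
  | .base _ => rfl
  | .step _ _ _ => Or.inl rfl

lemma pfx_refl : ∀ p : Hist M, pfx p p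
  | .base _ => rfl
  | .step _ _ _ => Or.inl rfl

lemma desc_pfx {U : Finset A} {p : Hist M} : ∀ {h : Hist M}, desc U p h → pfx p h
  | .base _, hd => hd
  | .step _ _ _, Or.inl hd => Or.inl hd
  | .step _ _ _, Or.inr hd => Or.inr (desc_pfx hd.2)

lemma pfx_len {p : Hist M} : ∀ {h : Hist M}, pfx p h → lenH p ≤ lenH h
  | .base _, hd => le_of_eq (by rw [hd])
  | .step h' L w, Or.inl hd => le_of_eq (by rw [hd])
  | .step h' L w, Or.inr hd => le_trans (pfx_len hd) (Nat.le_succ _)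

lemma pfx_antisymm {p : Hist M} : ∀ {h : Hist M}, pfx p h → pfx h p → p = h
  | .base _, hd, _ => hd
  | .step _ _ _, Or.inl hd, _ => hd
  | .step h' L w, Or.inr hd, hd' => by
      exact absurd (pfx_len hd') (by
        have := pfx_len hd
        simp only [lenH] at *
        omega)

lemma pfx_linear {p₁ p₂ : Hist M} : ∀ {h : Hist M}, pfx p₁ h → pfx p₂ h →
    pfx p₁ p₂ ∨ pfx p₂ p₁
  | .base w, h₁, h₂ => by rw [show p₁ = Hist.base w from h₁, show p₂ = Hist.base w from h₂]
                          exact Or.inl (pfx_refl _)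
  | .step h' L w, Or.inl h₁, h₂ => by rw [h₁]; exact Or.inr h₂
  | .step h' L w, Or.inr h₁, Or.inl h₂ => by rw [h₂]; exact Or.inl (Or.inr h₁)
  | .step h' L w, Or.inr h₁, Or.inr h₂ => pfx_linear h₁ h₂

lemma desc_restrict {U : Finset A} {p q : Hist M} :
    ∀ {h : Hist M}, desc U p h → pfx q h → pfx p q → desc U q h
  | .base w, _, hq, _ => hq
  | .step h' L w, Or.inl hd, hq, hpq => by
      subst hd
      have : q = Hist.step h' L w := pfx_antisymm hq hpq
      rw [this]; exact desc_refl _ _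
  | .step h' L w, Or.inr hd, Or.inl hq, hpq => by rw [hq]; exact desc_refl _ _
  | .step h' L w, Or.inr hd, Or.inr hq, hpq =>
      Or.inr ⟨hd.1, desc_restrict hd.2 hq hpq⟩

lemma desc_union {U U' : Finset A} {p : Hist M} :
    ∀ {h : Hist M}, desc U p h → desc U' p h → desc (U ∪ U') p h
  | .base _, hd, _ => hd
  | .step _ _ _, Or.inl hd, _ => Or.inl hd
  | .step _ _ _, _, Or.inl hd => Or.inl hd
  | .step _ _ _, Or.inr hd, Or.inr hd' =>
      Or.inr ⟨Finset.union_subset_iff.2 ⟨hd.1, hd'.1⟩, desc_union hd.2 hd'.2⟩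

lemma desc_popStep {U L : Finset A} {q : Hist M} {w : M.W} (hUL : U ⊆ L) :
    ∀ {h : Hist M}, desc U (Hist.step q L w) h → desc U q h
  | .base _, hd => by exact absurd hd (by simp [desc])
  | .step h' L' w', Or.inl hd => by
      injection hd with h1 h2 h3
      subst h1; subst h2
      exact Or.inr ⟨hUL, desc_refl _ _⟩
  | .step h' L' w', Or.inr hd => Or.inr ⟨hd.1, desc_popStep hUL hd.2⟩

lemma valid_of_pfx {p : Hist M} : ∀ {h : Hist M}, validH h → pfx p h → validH p
  | .base w, _, hp => by rw [show p = Hist.base w from hp]; trivial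
  | .step h' L w, vh, Or.inl hp => by rw [hp]; exact vh
  | .step h' L w, vh, Or.inr hp => valid_of_pfx vh.1 hp

/-- Any `∼^u_U` path between `h` and `h'` yields a common ancestor reachable
from both via edges labelled `⊇ U`. -/
lemma uSim_desc {U : Finset A} {h h' : HistV M} (hs : uSim M U h h') :
    ∃ p : Hist M, desc U p h.1 ∧ desc U p h'.1 := by
  induction hs with
  | @single b hr =>
    rcases hr with ⟨U₁, w, hsub, heq⟩ | ⟨U₁, w, hsub, heq⟩
    · exact ⟨h.1, desc_refl _ _, by rw [heq]; exact Or.inr ⟨hsub, desc_refl _ _⟩⟩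
    · exact ⟨b.1, by rw [heq]; exact Or.inr ⟨hsub, desc_refl _ _⟩, desc_refl _ _⟩
  | @tail b c hbc hr ih =>
    obtain ⟨p, hp₁, hp₂⟩ := ih
    rcases hr with ⟨U₁, w, hsub, heq⟩ | ⟨U₁, w, hsub, heq⟩
    · exact ⟨p, hp₁, by rw [heq]; exact Or.inr ⟨hsub, hp₂⟩⟩
    · rw [heq] at hp₂
      rcases hp₂ with hp₂ | hp₂
      · refine ⟨_, ?_, desc_refl _ _⟩
        rw [hp₂] at hp₁
        exact desc_popStep hsub hp₁
      · exact ⟨p, hp₁, hp₂.2⟩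

lemma desc_rtg {U : Finset A} {p : Hist M} :
    ∀ {h : Hist M} (vh : validH h), desc U p h → ∀ (hp : validH p),
    Relation.ReflTransGen (fun x y => stepRel M U x y ∨ stepRel M U y x)
      ⟨p, hp⟩ ⟨h, vh⟩
  | .base w, vh, hd, hp => by
      subst hd; exact Relation.ReflTransGen.refl
  | .step h' L w, vh, Or.inl hd, hp => by
      subst hd; exact Relation.ReflTransGen.refl
  | .step h' L w, vh, Or.inr hd, hp =>
      Relation.ReflTransGen.tail (desc_rtg vh.1 hd.2 hp)
        (Or.inl ⟨L, w, hd.1, rfl⟩)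

lemma rtg_symm {U : Finset A} {x y : HistV M}
    (hxy : Relation.ReflTransGen
      (fun x y => stepRel M U x y ∨ stepRel M U y x) x y) :
    Relation.ReflTransGen (fun x y => stepRel M U x y ∨ stepRel M U y x) y x := by
  induction hxy with
  | refl => exact Relation.ReflTransGen.refl
  | tail _ hr ih => exact Relation.ReflTransGen.head hr.symm ih

/-- If `h` and `h'` both descend from `p` along `U`-labelled edges and differ,
then `h ∼^u_U h'`. -/
lemma desc_uSim {U : Finset A} {p : Hist M} {h h' : HistV M}
    (h₁ : desc U p h.1) (h₂ : desc U p h'.1) (hne : h ≠ h') :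
    uSim M U h h' := by
  have hp : validH p := valid_of_pfx h.2 (desc_pfx h₁)
  have r₁ := desc_rtg h.2 h₁ hp
  have r₂ := desc_rtg h'.2 h₂ hp
  have htot : Relation.ReflTransGen
      (fun x y => stepRel M U x y ∨ stepRel M U y x) h h' :=
    (rtg_symm r₁).trans r₂
  rcases (Relation.reflTransGen_iff_eq_or_transGen.mp htot) with he | ht
  · exact absurd he.symm hne
  · exact ht

lemma rel_self_of_uSim {U : Finset A} {h h' : HistV M} (hs : uSim M U h h') :
    M.rel U (lastW h.1) (lastW h.1) := by
  have hex : ∃ c : HistV M, stepRel M U h c ∨ stepRel M U c h := by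
    obtain ⟨c, hr, -⟩ := (Relation.TransGen.head'_iff).mp hs
    exact ⟨c, hr⟩
  obtain ⟨c, hr⟩ := hex
  rcases hr with ⟨U₁, w, hsub, heq⟩ | ⟨U₁, w, hsub, heq⟩
  · have vc := c.2
    rw [heq] at vc
    have hrel : M.rel U₁ (lastW h.1) w := vc.2.1
    exact M.mono U U₁ hsub _ _ (M.trans _ _ _ _ hrel (M.symm _ _ _ hrel))
  · have vh := h.2
    rw [heq] at vh
    have hrel : M.rel U₁ (lastW c.1) w := vh.2.1
    have : lastW h.1 = w := by rw [heq]; rfl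
    rw [this]
    exact M.mono U U₁ hsub _ _ (M.trans _ _ _ _ (M.symm _ _ _ hrel) hrel)

lemma uSim_mono {U U' : Finset A} (hsub : U ⊆ U') {h h' : HistV M}
    (hs : uSim M U' h h') : uSim M U h h' := by
  refine Relation.TransGen.mono (fun x y hr => ?_) _ _ hs
  rcases hr with ⟨V, w, hVs, heq⟩ | ⟨V, w, hVs, heq⟩
  · exact Or.inl ⟨V, w, hsub.trans hVs, heq⟩
  · exact Or.inr ⟨V, w, hsub.trans hVs, heq⟩


variable [Fintype A]

lemma exists_maximal_step {U : Finset A} {w w' : M.W} (hrel : M.rel U w w') :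
    ∃ (V : Finset A) (w'' : M.W), U ⊆ V ∧ M.rel V w w'' ∧
      ∀ V', V ⊆ V' → M.rel V' w w'' → V' = V := by
  classical
  set P : ℕ → Prop := fun n => ∃ (V : Finset A) (w'' : M.W),
    U ⊆ V ∧ M.rel V w w'' ∧ V.card = n with hP
  have hP0 : P U.card := ⟨U, w', subset_rfl, hrel, rfl⟩
  have hble : U.card ≤ Fintype.card A := Finset.card_le_univ U
  have hspec : P (Nat.findGreatest P (Fintype.card A)) :=
    Nat.findGreatest_spec hble hP0
  obtain ⟨V, w'', hUV, hrV, hcard⟩ := hspec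
  refine ⟨V, w'', hUV, hrV, fun V' hVV' hrV' => ?_⟩
  by_contra hne
  have hlt : V.card < V'.card :=
    Finset.card_lt_card (lt_of_le_of_ne hVV' (Ne.symm hne))
  have : ¬ P V'.card :=
    Nat.findGreatest_is_greatest (by omega) (Finset.card_le_univ V')
  exact this ⟨V', w'', hUV.trans hVV', hrV', rfl⟩

lemma uSim_self_of_rel {U : Finset A} {h : HistV M}
    (hrel : M.rel U (lastW h.1) (lastW h.1)) : uSim M U h h := by
  obtain ⟨V, w'', hUV, hrV, hmax⟩ := exists_maximal_step hrel
  have vc : validH (Hist.step h.1 V w'') := ⟨h.2, hrV, fun V' h1 h2 => hmax V' h1 h2⟩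
  have hstep : stepRel M U h ⟨_, vc⟩ := ⟨V, w'', hUV, rfl⟩
  exact Relation.TransGen.tail (Relation.TransGen.single (Or.inl hstep))
    (Or.inr hstep)

lemma uSim_union {U U' : Finset A} {h h' : HistV M}
    (h₁ : uSim M U h h') (h₂ : uSim M U' h h') : uSim M (U ∪ U') h h' := by
  by_cases hne : h = h'
  · subst hne
    exact uSim_self_of_rel (M.union U U' _ (rel_self_of_uSim h₁) (rel_self_of_uSim h₂))
  obtain ⟨p₁, hd₁, hd₁'⟩ := uSim_desc h₁
  obtain ⟨p₂, hd₂, hd₂'⟩ := uSim_desc h₂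
  rcases pfx_linear (desc_pfx hd₁) (desc_pfx hd₂) with hpp | hpp
  · -- p₁ prefix of p₂ : restrict the U-descents to p₂
    have e₁ : desc U p₂ h.1 := desc_restrict hd₁ (desc_pfx hd₂) hpp
    have e₂ : desc U p₂ h'.1 := desc_restrict hd₁' (desc_pfx hd₂') hpp
    exact desc_uSim (desc_union e₁ hd₂) (desc_union e₂ hd₂') hne
  · have e₁ : desc U' p₁ h.1 := desc_restrict hd₂ (desc_pfx hd₁) hpp
    have e₂ : desc U' p₁ h'.1 := desc_restrict hd₂' (desc_pfx hd₁') hpp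
    exact desc_uSim (desc_union hd₁ e₁) (desc_union hd₁' e₂) hne

lemma uSim_of_forall {h h' : HistV M} :
    ∀ V : Finset A, V.Nonempty → (∀ a ∈ V, uSim M {a} h h') → uSim M V h h' := by
  intro V
  induction V using Finset.induction_on with
  | empty => intro hV; simp at hV
  | @insert a s ha ih =>
    intro _ hall
    rcases s.eq_empty_or_nonempty with rfl | hs
    · simpa using hall a (by simp)
    · have := uSim_union (hall a (Finset.mem_insert_self a s))
        (ih hs (fun b hb => hall b (Finset.mem_insert_of_mem hb)))
      rwa [← Finset.insert_eq] at this

end Aux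

/-- The unraveling has standard group knowledge: `h ∼^u_U h'` and `h ∼^u_{U'} h'`
imply `h ∼^u_{U∪U'} h'`; consequently `∼^u_V = ⋂_{a∈V} ∼^u_{{a}}` for nonempty `V`. -/


theorem stmt18 {A : Type} [DecidableEq A] [Fintype A] (M : GEM A) :
    (∀ (U U' : Finset A) (h h' : HistV M),
      uSim M U h h' → uSim M U' h h' → uSim M (U ∪ U') h h') ∧
    (∀ V : Finset A, V.Nonempty → ∀ h h' : HistV M,
      uSim M V h h' ↔ ∀ a ∈ V, uSim M {a} h h') := by
  refine ⟨fun U U' h h' h₁ h₂ => uSim_union h₁ h₂, fun V hV h h' => ?_⟩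
  constructor
  · intro hs a ha
    exact uSim_mono (Finset.singleton_subset_iff.2 ha) hs
  · exact uSim_of_forall V hV
end
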